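/- Let H1, H2, H3, H4 be subgroups of a finite group G with H2 ≤ H1. Then the Ingleton inequality holds for (H1, H2, H3, H4). -/

import Mathlib

lemma card_eq_relIndex_mul_card_inf {G : Type*} [Group G] (H K : Subgroup G) :
    Nat.card K = H.relIndex K * Nat.card (H ⊓ K : Subgroup G) := by
  have h1 : Nat.card ((H.subgroupOf K) : Subgroup K) = Nat.card (H ⊓ K : Subgroup G) := by
    rw [← Subgroup.inf_subgroupOf_right]
    exact Nat.card_congr (Subgroup.subgroupOfEquivOfLe inf_le_right).toEquiv
  rw [Subgroup.relIndex, ← h1, Subgroup.index_mul_card]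

lemma key_ineq {G : Type*} [Group G] [Finite G] (A B H : Subgroup G) (hA : A ≤ H)
    (hB : B ≤ H) :
    Nat.card A * Nat.card B ≤ Nat.card H * Nat.card (A ⊓ B : Subgroup G) := by
  have hH : Nat.card H = A.relIndex H * Nat.card A := by
    have := card_eq_relIndex_mul_card_inf A H
    rwa [inf_eq_left.mpr hA] at this
  have hB' : Nat.card B = A.relIndex B * Nat.card (A ⊓ B : Subgroup G) :=
    card_eq_relIndex_mul_card_inf A B
  have hle : A.relIndex B ≤ A.relIndex H :=
    Subgroup.relIndex_le_of_le_right hB (by rw [Subgroup.relIndex]; exact Subgroup.index_ne_zero_of_finite)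
  calc Nat.card A * Nat.card B = A.relIndex B * Nat.card (A ⊓ B : Subgroup G) * Nat.card A := by
        rw [hB']; ring
    _ ≤ A.relIndex H * Nat.card (A ⊓ B : Subgroup G) * Nat.card A := by
        gcongr
    _ = Nat.card H * Nat.card (A ⊓ B : Subgroup G) := by rw [hH]; ring

theorem stmt10 {G : Type*} [Group G] [Finite G] (H1 H2 H3 H4 : Subgroup G)
    (h : H2 ≤ H1) :
    Nat.card (H1 : Subgroup G) * Nat.card (H2 : Subgroup G) * Nat.card (H3 ⊓ H4 : Subgroup G) * Nat.card (H1 ⊓ H2 ⊓ H3 : Subgroup G) * Nat.card (H1 ⊓ H2 ⊓ H4 : Subgroup G) ≥ Nat.card (H1 ⊓ H2 : Subgroup G) * Nat.card (H1 ⊓ H3 : Subgroup G) * Nat.card (H1 ⊓ H4 : Subgroup G) * Nat.card (H2 ⊓ H3 : Subgroup G) * Nat.card (H2 ⊓ H4 : Subgroup G) := by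
  rw [inf_eq_right.mpr h]
  have hkey := key_ineq (H1 ⊓ H3) (H1 ⊓ H4) H1 inf_le_left inf_le_left
  have hmono : Nat.card ((H1 ⊓ H3) ⊓ (H1 ⊓ H4) : Subgroup G) ≤
      Nat.card (H3 ⊓ H4 : Subgroup G) := by
    refine Nat.le_of_dvd Nat.card_pos (Subgroup.card_dvd_of_le ?_)
    exact le_inf (inf_le_of_left_le inf_le_right) (inf_le_of_right_le inf_le_right)
  have h2 : Nat.card (H1 ⊓ H3 : Subgroup G) * Nat.card (H1 ⊓ H4 : Subgroup G) ≤
      Nat.card H1 * Nat.card (H3 ⊓ H4 : Subgroup G) := by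
    calc _ ≤ Nat.card H1 * Nat.card ((H1 ⊓ H3) ⊓ (H1 ⊓ H4) : Subgroup G) := hkey
      _ ≤ _ := by gcongr
  calc Nat.card H2 * Nat.card (H1 ⊓ H3 : Subgroup G) * Nat.card (H1 ⊓ H4 : Subgroup G) *
        Nat.card (H2 ⊓ H3 : Subgroup G) * Nat.card (H2 ⊓ H4 : Subgroup G)
      = (Nat.card (H1 ⊓ H3 : Subgroup G) * Nat.card (H1 ⊓ H4 : Subgroup G)) *
        (Nat.card H2 * Nat.card (H2 ⊓ H3 : Subgroup G) * Nat.card (H2 ⊓ H4 : Subgroup G)) := by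
        ring
    _ ≤ (Nat.card H1 * Nat.card (H3 ⊓ H4 : Subgroup G)) *
        (Nat.card H2 * Nat.card (H2 ⊓ H3 : Subgroup G) * Nat.card (H2 ⊓ H4 : Subgroup G)) := by
        gcongr
    _ = _ := by ring
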